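/- Let n ≥ 1 and 1 ≤ ω ≤ ϖ be integers with 2ϖ−1 ≤ n, and let ν be a divisor of n with ν ≥ ϖ + ω − 1. Let m ∈ M_ω, and let c ∈ ℝⁿ satisfy: |c_j| ≤ 1 for all j, |c_j| = 1 for at least one j, and the DFT of |c| is supported on multiples of ν, i.e. Σ_{j=0}^{n−1} |c_j|·exp(−2πi·j·k/n) = 0 for every k ∈ {0,…,n−1} not divisible by ν. Set s = m ∘ c (componentwise product). Then the AP-B sequence m_0 = |s|, m_{i+1} = P_{≥|s|}(P_ϖ m_i) converges to m. -/

import Mathlib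

open scoped BigOperators

noncomputable section

/-- Low-frequency index set `K_ω ⊆ {0,…,n−1}`. -/
def Kset (n ω : ℕ) : Set (Fin n) := {k | (k : ℕ) ≤ ω - 1 ∨ n - ω + 1 ≤ (k : ℕ)}

/-- The set of ω-bandlimited real vectors `S_ω`. -/
def Sband (n ω : ℕ) : Set (EuclideanSpace ℝ (Fin n)) :=
  {x | ∀ k : Fin n, k ∉ Kset n ω →
    ∑ j : Fin n, (x j : ℂ) *
      Complex.exp (-(2 * (Real.pi : ℂ) * Complex.I * ((j : ℕ) : ℂ) * ((k : ℕ) : ℂ)) / (n : ℂ)) = 0}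

/-- The constraint set `S_{≥|s|}`. -/
def Sgeq (n : ℕ) (s : EuclideanSpace ℝ (Fin n)) : Set (EuclideanSpace ℝ (Fin n)) :=
  {x | ∀ j, |s j| ≤ x j}

/-- The metric projection onto `S_{≥|s|}`: componentwise `max(z_j, |s_j|)`. -/
def Pgeq (n : ℕ) (s z : EuclideanSpace ℝ (Fin n)) : EuclideanSpace ℝ (Fin n) :=
  (WithLp.equiv 2 (Fin n → ℝ)).symm (fun j => max (z j) |s j|)

/-- The rectangular low-pass filter `P_ϖ` (the orthogonal projection onto `S_ϖ`):
`(P_ϖ z)_j = (1/n)·Σ_{k∈K_ϖ} Σ_{l} z_l·cos(2πk(j−l)/n)`. -/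
def Pband (n ϖ : ℕ) (z : EuclideanSpace ℝ (Fin n)) : EuclideanSpace ℝ (Fin n) :=
  (WithLp.equiv 2 (Fin n → ℝ)).symm (fun j =>
    (1 / (n : ℝ)) *
      ∑ k ∈ Finset.univ.filter (fun k : Fin n => (k : ℕ) ≤ ϖ - 1 ∨ n - ϖ + 1 ≤ (k : ℕ)),
        ∑ l : Fin n, z l * Real.cos (2 * Real.pi * (k : ℕ) * (((j : ℕ) : ℝ) - ((l : ℕ) : ℝ)) / (n : ℝ)))

/-- The set of nonnegative ω-bandlimited vectors `M_ω`. -/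
def Mmod (n ω : ℕ) : Set (EuclideanSpace ℝ (Fin n)) :=
  {x ∈ Sband n ω | ∀ j, 0 ≤ x j}

namespace APBaux

/-- The basic character. -/
def ee (n : ℕ) (r : ℤ) : ℂ := Complex.exp (2 * Real.pi * Complex.I * r / n)

lemma ee_eq_zpow (n : ℕ) (r : ℤ) :
    ee n r = Complex.exp (2 * Real.pi * Complex.I / n) ^ r := by
  rw [ee, ← Complex.exp_int_mul]
  ring_nf

lemma ee_eq_one_iff (n : ℕ) (hn : n ≠ 0) (r : ℤ) : ee n r = 1 ↔ (n : ℤ) ∣ r := by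
  rw [ee_eq_zpow]
  have h := Complex.isPrimitiveRoot_exp n hn
  have := h.zpow_eq_one_iff_dvd r
  rw [← this, mul_comm]

lemma ee_add (n : ℕ) (r s : ℤ) : ee n (r + s) = ee n r * ee n s := by
  rw [ee, ee, ee, ← Complex.exp_add]
  congr 1
  push_cast
  ring

lemma ee_zero (n : ℕ) : ee n 0 = 1 := by simp [ee]

/-- Orthogonality. -/
lemma ee_sum_orth (n : ℕ) (hn : n ≠ 0) (r : ℤ) :
    ∑ k : Fin n, ee n (k * r) = if (n : ℤ) ∣ r then (n : ℂ) else 0 := by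
  by_cases h : (n : ℤ) ∣ r
  · simp only [h, if_true]
    have : ∀ k : Fin n, ee n (k * r) = 1 := fun k =>
      (ee_eq_one_iff n hn _).2 (Dvd.dvd.mul_left h _)
    simp [this]
  · simp only [h, if_false]
    have hx : ee n r ≠ 1 := fun hh => h ((ee_eq_one_iff n hn r).1 hh)
    have hgeom : ∑ k : Fin n, (ee n r) ^ (k : ℕ) = ((ee n r) ^ n - 1) / (ee n r - 1) :=
      by rw [← geom_sum_eq hx n, Fin.sum_univ_eq_sum_range]
    have hpow : ∀ k : Fin n, ee n (k * r) = (ee n r) ^ (k : ℕ) := by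
      intro k
      rw [ee_eq_zpow, ee_eq_zpow, ← zpow_natCast, ← zpow_mul]
      ring_nf
    have hn1 : (ee n r) ^ n = 1 := by
      rw [ee_eq_zpow, ← zpow_natCast, ← zpow_mul, ← ee_eq_zpow, ee_eq_one_iff n hn]
      exact dvd_mul_left _ _
    rw [Finset.sum_congr rfl (fun k _ => hpow k), hgeom, hn1]
    simp

end APBaux

namespace APBaux

lemma ee_congr (n : ℕ) (hn : n ≠ 0) {r s : ℤ} (h : (n : ℤ) ∣ r - s) : ee n r = ee n s := by
  have : ee n r = ee n (s + (r - s)) := by ring_nf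
  rw [this, ee_add, (ee_eq_one_iff n hn _).2 h, mul_one]

/-- DFT of a real vector, defined for all integer frequencies. -/
def dft (n : ℕ) (z : Fin n → ℝ) (k : ℤ) : ℂ := ∑ j : Fin n, (z j : ℂ) * ee n (-(j * k))

lemma dft_congr (n : ℕ) (hn : n ≠ 0) (z : Fin n → ℝ) {k k' : ℤ} (h : (n : ℤ) ∣ k - k') :
    dft n z k = dft n z k' := by
  unfold dft
  refine Finset.sum_congr rfl fun j _ => ?_
  congr 1
  apply ee_congr n hn
  have he : -((j : ℤ) * k) - -((j : ℤ) * k') = (-(j : ℤ)) * (k - k') := by ring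
  rw [he]
  exact h.mul_left _

lemma dft_zero_freq (n : ℕ) (z : Fin n → ℝ) : dft n z 0 = ((∑ j, z j : ℝ) : ℂ) := by
  simp [dft, ee_zero]

/-- Inversion formula. -/
lemma dft_inversion (n : ℕ) (hn : n ≠ 0) (z : Fin n → ℝ) (j : Fin n) :
    (1 / (n : ℂ)) * ∑ k : Fin n, dft n z k * ee n (j * k) = (z j : ℂ) := by
  have hswap : ∑ k : Fin n, dft n z k * ee n (j * k)
      = ∑ l : Fin n, (z l : ℂ) * ∑ k : Fin n, ee n (k * ((j : ℤ) - l)) := by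
    unfold dft
    simp only [Finset.sum_mul]
    rw [Finset.sum_comm]
    refine Finset.sum_congr rfl fun l _ => ?_
    rw [Finset.mul_sum]
    refine Finset.sum_congr rfl fun k _ => ?_
    rw [mul_assoc, ← ee_add]
    congr 1
    ring
  rw [hswap]
  have : ∀ l : Fin n, (z l : ℂ) * ∑ k : Fin n, ee n (k * ((j : ℤ) - l))
      = if l = j then (n : ℂ) * z j else 0 := by
    intro l
    rw [ee_sum_orth n hn]
    by_cases h : l = j
    · subst h; simp [mul_comm]
    · have hnd : ¬ ((n : ℤ) ∣ ((j : ℤ) - l)) := by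
        intro hd
        have hj : ((j : ℕ) : ℤ) < n := by exact_mod_cast j.isLt
        have hl : ((l : ℕ) : ℤ) < n := by exact_mod_cast l.isLt
        have hj0 : (0 : ℤ) ≤ (j : ℕ) := Int.natCast_nonneg _
        have hl0 : (0 : ℤ) ≤ (l : ℕ) := Int.natCast_nonneg _
        have hnpos : (0 : ℤ) < n := by exact_mod_cast Nat.pos_of_ne_zero hn
        rcases hd with ⟨c, hc⟩
        have hc0 : c = 0 := by nlinarith
        rw [hc0, mul_zero] at hc
        have : (j : ℕ) = (l : ℕ) := by omega
        exact h (Fin.ext this.symm)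
      rw [if_neg hnd, mul_zero, if_neg h]
  rw [Finset.sum_congr rfl fun l _ => this l, Finset.sum_ite_eq' Finset.univ j
    (fun _ => (n : ℂ) * z j)]
  simp only [Finset.mem_univ, if_true]
  have hnc : (n : ℂ) ≠ 0 := Nat.cast_ne_zero.2 hn
  field_simp

end APBaux

namespace APBaux

lemma dft_int_reduce (n : ℕ) (hn : n ≠ 0) (z : Fin n → ℝ) (x : ℤ) :
    dft n z x = dft n z (((x % n).toNat : ℕ) : ℤ) := by
  apply dft_congr n hn
  have h0 : (0:ℤ) < n := by exact_mod_cast Nat.pos_of_ne_zero hn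
  rw [Int.toNat_of_nonneg (Int.emod_nonneg x (by exact_mod_cast hn))]
  exact ⟨x / n, by rw [Int.emod_def]; ring⟩

lemma emod_toNat_lt (n : ℕ) (hn : n ≠ 0) (x : ℤ) : (x % n).toNat < n := by
  have h0 : (0:ℤ) < n := by exact_mod_cast Nat.pos_of_ne_zero hn
  have := Int.emod_lt_of_pos x h0
  omega

/-- Bridge: the statement's DFT sums equal `dft`. -/
lemma dft_eq_statement (n : ℕ) (z : Fin n → ℝ) (k : Fin n) :
    ∑ j : Fin n, ((z j : ℝ) : ℂ) *
      Complex.exp (-(2 * (Real.pi : ℂ) * Complex.I * ((j : ℕ) : ℂ) * ((k : ℕ) : ℂ)) / (n : ℂ))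
    = dft n z ((k : ℕ) : ℤ) := by
  refine Finset.sum_congr rfl fun j _ => ?_
  congr 1
  rw [ee]
  congr 1
  push_cast
  ring

/-- Bridge: real part of `ee` is the cosine appearing in `Pband`. -/
lemma ee_re (n : ℕ) (r : ℤ) : (ee n r).re = Real.cos (2 * Real.pi * r / n) := by
  rw [ee, show (2 * (Real.pi:ℂ) * Complex.I * r / n)
      = ((2 * Real.pi * r / n : ℝ) : ℂ) * Complex.I by push_cast; ring,
    Complex.exp_ofReal_mul_I_re]

lemma fin_add_shift (n p : ℕ) (hn : n ≠ 0) (pf : Fin n)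
    (hpf : (n : ℤ) ∣ (p : ℤ) - ((pf : ℕ) : ℤ)) (j : Fin n) :
    (n : ℤ) ∣ (((j + pf : Fin n) : ℕ) : ℤ) - (((j : ℕ) : ℤ) + (p : ℤ)) := by
  haveI : NeZero n := ⟨hn⟩
  have hv : ((j + pf : Fin n) : ℕ) = ((j : ℕ) + (pf : ℕ)) % n := by rw [Fin.add_def]
  have h1 : ((((j : ℕ) + (pf : ℕ)) % n : ℕ) : ℤ) = (((j:ℕ):ℤ) + ((pf:ℕ):ℤ)) % (n:ℤ) := by
    push_cast
    rfl
  have h2 : (((j:ℕ):ℤ) + ((pf:ℕ):ℤ)) % (n:ℤ) ≡ ((j:ℕ):ℤ) + ((pf:ℕ):ℤ) [ZMOD (n:ℤ)] :=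
    Int.emod_emod_of_dvd _ dvd_rfl
  have h3 : ((pf:ℕ):ℤ) ≡ (p:ℤ) [ZMOD (n:ℤ)] := (Int.modEq_iff_dvd.2 hpf).symm.symm
  have h4 : (((j + pf : Fin n) : ℕ) : ℤ) ≡ ((j:ℕ):ℤ) + (p:ℤ) [ZMOD (n:ℤ)] := by
    rw [hv, h1]
    exact h2.trans ((Int.ModEq.refl _).add h3)
  have := h4.symm.dvd
  simpa using this

/-- Periodicity of `z` implies that its DFT is supported on multiples of `ν`. -/
lemma dft_eq_zero_of_periodic (n ν p : ℕ) (hn : n ≠ 0) (hp : p * ν = n)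
    (z : Fin n → ℝ) (pf : Fin n) (hpf : (n : ℤ) ∣ (p : ℤ) - ((pf : ℕ) : ℤ))
    (hz : ∀ j, z (j + pf) = z j) (k : ℤ) (hk : ¬ (ν : ℤ) ∣ k) : dft n z k = 0 := by
  haveI : NeZero n := ⟨hn⟩
  have key : dft n z k = ee n (-(p * k)) * dft n z k := by
    unfold dft
    rw [Finset.mul_sum]
    rw [← Fintype.sum_equiv (Equiv.addRight pf)
      (fun j => ee n (-(p*k)) * ((z j : ℂ) * ee n (-(j * k))))
      (fun j => (z j : ℂ) * ee n (-(j * k))) ?_]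
    · intro j
      simp only [Equiv.coe_addRight]
      rw [hz j]
      rw [mul_left_comm, ← ee_add]
      congr 1
      apply ee_congr n hn
      have h2 : (n:ℤ) ∣ ((((j + pf : Fin n) : ℕ) : ℤ) - (((j:ℕ):ℤ) + (p:ℤ))) * k :=
        (fin_add_shift n p hn pf hpf j).mul_right k
      have h3 : -(↑p * k) + -(↑↑j * k) - -(↑↑(j + pf) * k)
          = ((((j + pf : Fin n) : ℕ) : ℤ) - (((j:ℕ):ℤ) + (p:ℤ))) * k := by push_cast; ring
      rw [h3]
      exact h2
  have hne : ee n (-(p * k)) ≠ 1 := by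
    intro h1
    rw [ee_eq_one_iff n hn] at h1
    apply hk
    have hdvd : (n : ℤ) ∣ (p : ℤ) * k := dvd_neg.mp h1
    have hp0 : (p : ℤ) ≠ 0 := by
      have : p ≠ 0 := by rintro rfl; simp at hp; exact hn hp.symm
      exact_mod_cast this
    rw [← hp] at hdvd
    push_cast at hdvd
    exact (mul_dvd_mul_iff_left hp0).1 hdvd
  by_contra h
  have h2 : (1 - ee n (-(p * k))) * dft n z k = 0 := by linear_combination key
  rcases mul_eq_zero.1 h2 with h3 | h3
  · exact hne (by linear_combination -h3)
  · exact h h3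

/-- DFT supported on multiples of ν implies periodicity. -/
lemma periodic_of_dft_support (n ν p : ℕ) (hn : n ≠ 0) (hp : p * ν = n)
    (z : Fin n → ℝ) (pf : Fin n) (hpf : (n : ℤ) ∣ (p : ℤ) - ((pf : ℕ) : ℤ))
    (hz : ∀ k : Fin n, ¬ (ν : ℤ) ∣ ((k : ℕ) : ℤ) → dft n z ((k : ℕ) : ℤ) = 0) :
    ∀ j, z (j + pf) = z j := by
  haveI : NeZero n := ⟨hn⟩
  intro j
  have hinv1 := dft_inversion n hn z (j + pf)
  have hinv2 := dft_inversion n hn z j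
  have hterm : ∀ k : Fin n,
      dft n z ((k:ℕ):ℤ) * ee n ((((j + pf : Fin n) : ℕ) : ℤ) * k)
      = dft n z ((k:ℕ):ℤ) * ee n (((j : ℕ) : ℤ) * k) := by
    intro k
    by_cases hd : (ν : ℤ) ∣ ((k : ℕ) : ℤ)
    · congr 1
      apply ee_congr n hn
      obtain ⟨a, ha⟩ := hd
      have h2 : (n:ℤ) ∣ ((((j + pf : Fin n) : ℕ) : ℤ) - (((j:ℕ):ℤ) + (p:ℤ))) * ((k:ℕ):ℤ) :=
        (fin_add_shift n p hn pf hpf j).mul_right _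
      have h5 : (n:ℤ) ∣ (p:ℤ) * ((k:ℕ):ℤ) := by
        refine ⟨a, ?_⟩
        rw [ha, ← hp]
        push_cast
        ring
      have h3 : (((j + pf : Fin n) : ℕ) : ℤ) * ((k:ℕ):ℤ) - (((j:ℕ):ℤ)) * ((k:ℕ):ℤ)
          = ((((j + pf : Fin n) : ℕ) : ℤ) - (((j:ℕ):ℤ) + (p:ℤ))) * ((k:ℕ):ℤ)
            + (p:ℤ) * ((k:ℕ):ℤ) := by ring
      rw [h3]
      exact dvd_add h2 h5
    · rw [hz k hd, zero_mul, zero_mul]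
  rw [Finset.sum_congr rfl (fun k _ => hterm k)] at hinv1
  rw [hinv1] at hinv2
  exact_mod_cast hinv2

end APBaux

namespace APBaux

lemma band_arith (n ω ϖ ν : ℕ) (hn : n ≠ 0) (hω : 1 ≤ ω) (hωϖ : ω ≤ ϖ) (h2ϖ : 2*ϖ - 1 ≤ n)
    (hνn : ν ∣ n) (hνge : ϖ + ω - 1 ≤ ν)
    (k t : ℕ) (hkn : k < n) (htn : t < n) (ht0 : t ≠ 0) (hνt : ν ∣ t)
    (hkband : k ≤ ϖ - 1 ∨ n - ϖ + 1 ≤ k) :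
    ¬ (((((k:ℤ) - t) % n).toNat) ≤ ω - 1 ∨ n - ω + 1 ≤ ((((k:ℤ) - t) % n).toNat)) := by
  have hν0 : ν ≠ 0 := by rintro rfl; exact ht0 (Nat.eq_zero_of_zero_dvd hνt)
  have htν : ν ≤ t := Nat.le_of_dvd (Nat.pos_of_ne_zero ht0) hνt
  have htn' : t ≤ n - ν := by
    have h1 : ν ∣ n - t := (Nat.dvd_sub hνn hνt)
    have h2 : ν ≤ n - t := Nat.le_of_dvd (by omega) h1
    omega
  have h0 : (0:ℤ) < n := by exact_mod_cast Nat.pos_of_ne_zero hn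
  by_cases hle : t ≤ k
  · have he : ((k:ℤ) - t) % n = (k:ℤ) - t := Int.emod_eq_of_lt (by push_cast; omega) (by push_cast; omega)
    rw [he]
    have : ((k:ℤ) - t).toNat = k - t := by omega
    rw [this]
    omega
  · have he1 : ((k:ℤ) - t) % n = ((k:ℤ) - t + n * 1) % n := by rw [Int.add_mul_emod_self_left]
    have he : ((k:ℤ) - t) % n = (k:ℤ) - t + n :=
      by rw [he1, mul_one, Int.emod_eq_of_lt (by push_cast; omega) (by push_cast; omega)]
    rw [he]
    have : ((k:ℤ) - t + n).toNat = k + n - t := by omega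
    rw [this]
    omega

end APBaux

namespace APBaux

lemma key_dft (n ω ϖ ν : ℕ) (hn : n ≠ 0) (hω : 1 ≤ ω) (hωϖ : ω ≤ ϖ) (h2ϖ : 2*ϖ - 1 ≤ n)
    (hνn : ν ∣ n) (hνge : ϖ + ω - 1 ≤ ν)
    (m d : Fin n → ℝ)
    (hm : ∀ k : Fin n, ¬ ((k:ℕ) ≤ ω - 1 ∨ n - ω + 1 ≤ (k:ℕ)) → dft n m ((k:ℕ):ℤ) = 0)
    (hd : ∀ k : Fin n, ¬ (ν:ℤ) ∣ ((k:ℕ):ℤ) → dft n d ((k:ℕ):ℤ) = 0)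
    (k : Fin n) (hk : (k:ℕ) ≤ ϖ - 1 ∨ n - ϖ + 1 ≤ (k:ℕ)) :
    dft n (fun l => m l * d l) ((k:ℕ):ℤ)
      = (((∑ l, d l : ℝ) : ℂ) / n) * dft n m ((k:ℕ):ℤ) := by
  haveI : NeZero n := ⟨hn⟩
  have hinv := fun l => dft_inversion n hn d l
  have step1 : dft n (fun l => m l * d l) ((k:ℕ):ℤ)
      = ∑ l : Fin n, ∑ t : Fin n,
          (1/(n:ℂ)) * dft n d ((t:ℕ):ℤ) * (m l : ℂ)
            * ee n (((l:ℕ):ℤ) * (t:ℕ) - ((l:ℕ):ℤ) * (k:ℕ)) := by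
    refine Finset.sum_congr rfl fun l _ => ?_
    have h1 : ∀ t : Fin n, (1/(n:ℂ)) * dft n d ((t:ℕ):ℤ) * (m l : ℂ)
          * ee n (((l:ℕ):ℤ) * (t:ℕ) - ((l:ℕ):ℤ) * (k:ℕ))
        = ((dft n d ((t:ℕ):ℤ)) * ee n (((l:ℕ):ℤ) * (t:ℕ)))
            * ((1/(n:ℂ)) * ((m l : ℂ) * ee n (-(((l:ℕ):ℤ) * (k:ℕ))))) := by
      intro t
      rw [show ((l:ℕ):ℤ) * (t:ℕ) - ((l:ℕ):ℤ) * (k:ℕ)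
          = ((l:ℕ):ℤ) * (t:ℕ) + -(((l:ℕ):ℤ) * (k:ℕ)) by ring, ee_add]
      ring
    have hS : (∑ t : Fin n, dft n d ((t:ℕ):ℤ) * ee n (((l:ℕ):ℤ) * (t:ℕ))) = (n:ℂ) * (d l : ℂ) := by
      have h2 := hinv l
      have hnc : (n:ℂ) ≠ 0 := Nat.cast_ne_zero.2 hn
      field_simp at h2
      rw [h2]
    rw [Finset.sum_congr rfl (fun t _ => h1 t), ← Finset.sum_mul, hS]
    have hnc : (n:ℂ) ≠ 0 := Nat.cast_ne_zero.2 hn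
    push_cast
    field_simp
  have step2 : (∑ l : Fin n, ∑ t : Fin n,
        (1/(n:ℂ)) * dft n d ((t:ℕ):ℤ) * (m l : ℂ)
          * ee n (((l:ℕ):ℤ) * (t:ℕ) - ((l:ℕ):ℤ) * (k:ℕ)))
      = (1/(n:ℂ)) * ∑ t : Fin n, dft n d ((t:ℕ):ℤ) * dft n m (((k:ℕ):ℤ) - ((t:ℕ):ℤ)) := by
    rw [Finset.sum_comm, Finset.mul_sum]
    refine Finset.sum_congr rfl fun t _ => ?_
    have h1 : ∀ l : Fin n, (1/(n:ℂ)) * dft n d ((t:ℕ):ℤ) * (m l : ℂ)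
          * ee n (((l:ℕ):ℤ) * (t:ℕ) - ((l:ℕ):ℤ) * (k:ℕ))
        = ((1/(n:ℂ)) * dft n d ((t:ℕ):ℤ))
            * ((m l : ℂ) * ee n (-(((l:ℕ):ℤ) * (((k:ℕ):ℤ) - ((t:ℕ):ℤ))))) := by
      intro l
      rw [show -(((l:ℕ):ℤ) * (((k:ℕ):ℤ) - ((t:ℕ):ℤ)))
          = ((l:ℕ):ℤ) * (t:ℕ) - ((l:ℕ):ℤ) * (k:ℕ) by ring]
      ring
    rw [Finset.sum_congr rfl (fun l _ => h1 l), ← Finset.mul_sum]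
    have h2 : dft n m (((k:ℕ):ℤ) - ((t:ℕ):ℤ))
        = ∑ l : Fin n, (m l : ℂ) * ee n (-(((l:ℕ):ℤ) * (((k:ℕ):ℤ) - ((t:ℕ):ℤ)))) := rfl
    rw [h2]
    ring
  have step3 : (∑ t : Fin n, dft n d ((t:ℕ):ℤ) * dft n m (((k:ℕ):ℤ) - ((t:ℕ):ℤ)))
      = ((∑ l, d l : ℝ) : ℂ) * dft n m ((k:ℕ):ℤ) := by
    rw [Finset.sum_eq_single (0 : Fin n)]
    · rw [show (((0:Fin n):ℕ):ℤ) = (0:ℤ) by simp, dft_zero_freq, sub_zero]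
    · intro t _ ht0
      by_cases hdvd : (ν:ℤ) ∣ ((t:ℕ):ℤ)
      · have hmz : dft n m (((k:ℕ):ℤ) - ((t:ℕ):ℤ)) = 0 := by
          rw [dft_int_reduce n hn m _]
          have hrlt : ((((k:ℕ):ℤ) - ((t:ℕ):ℤ)) % n).toNat < n := emod_toNat_lt n hn _
          have harith := band_arith n ω ϖ ν hn hω hωϖ h2ϖ hνn hνge (k:ℕ) (t:ℕ)
            k.isLt t.isLt (by intro h; exact ht0 (Fin.ext (by rw [h]; simp))) (by exact_mod_cast hdvd) hk
          exact hm ⟨_, hrlt⟩ harith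
        rw [hmz, mul_zero]
      · rw [hd t hdvd, zero_mul]
    · intro h
      exact absurd (Finset.mem_univ _) h
  rw [step1, step2, step3]
  ring

end APBaux

namespace APBaux

lemma key_pband (n ω ϖ ν : ℕ) (hn : n ≠ 0) (hω : 1 ≤ ω) (hωϖ : ω ≤ ϖ) (h2ϖ : 2*ϖ - 1 ≤ n)
    (hνn : ν ∣ n) (hνge : ϖ + ω - 1 ≤ ν)
    (m d : Fin n → ℝ)
    (hm : ∀ k : Fin n, ¬ ((k:ℕ) ≤ ω - 1 ∨ n - ω + 1 ≤ (k:ℕ)) → dft n m ((k:ℕ):ℤ) = 0)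
    (hd : ∀ k : Fin n, ¬ (ν:ℤ) ∣ ((k:ℕ):ℤ) → dft n d ((k:ℕ):ℤ) = 0)
    (j : Fin n) :
    (1 / (n : ℝ)) *
      ∑ k ∈ Finset.univ.filter (fun k : Fin n => (k : ℕ) ≤ ϖ - 1 ∨ n - ϖ + 1 ≤ (k : ℕ)),
        ∑ l : Fin n, (m l * d l) *
          Real.cos (2 * Real.pi * (k : ℕ) * (((j : ℕ) : ℝ) - ((l : ℕ) : ℝ)) / (n : ℝ))
    = ((∑ l, d l) / n) * m j := by
  haveI : NeZero n := ⟨hn⟩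
  have hnc : (n:ℂ) ≠ 0 := Nat.cast_ne_zero.2 hn
  set μ : ℂ := (((∑ l, d l : ℝ)):ℂ)/n with hμ
  have inner : ∀ k : Fin n, ((k:ℕ) ≤ ϖ - 1 ∨ n - ϖ + 1 ≤ (k:ℕ)) →
      (∑ l : Fin n, (m l * d l) *
        Real.cos (2 * Real.pi * (k : ℕ) * (((j : ℕ) : ℝ) - ((l : ℕ) : ℝ)) / (n : ℝ)))
      = (ee n (((j:ℕ):ℤ) * (k:ℕ)) * (μ * dft n m ((k:ℕ):ℤ))).re := by
    intro k hk
    have h1 : ∀ l : Fin n, (m l * d l) *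
          Real.cos (2 * Real.pi * (k : ℕ) * (((j : ℕ) : ℝ) - ((l : ℕ) : ℝ)) / (n : ℝ))
        = (((m l * d l : ℝ):ℂ) * ee n (((k:ℕ):ℤ) * (((j:ℕ):ℤ) - ((l:ℕ):ℤ)))).re := by
      intro l
      rw [Complex.re_ofReal_mul, ee_re]
      congr 2
      push_cast
      ring
    rw [Finset.sum_congr rfl (fun l _ => h1 l), ← Complex.re_sum]
    congr 1
    have h2 : ∀ l : Fin n, ((m l * d l : ℝ):ℂ) * ee n (((k:ℕ):ℤ) * (((j:ℕ):ℤ) - ((l:ℕ):ℤ)))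
        = ee n (((j:ℕ):ℤ) * (k:ℕ)) * (((m l * d l : ℝ):ℂ) * ee n (-(((l:ℕ):ℤ) * (k:ℕ)))) := by
      intro l
      rw [show ((k:ℕ):ℤ) * (((j:ℕ):ℤ) - ((l:ℕ):ℤ))
          = ((j:ℕ):ℤ) * (k:ℕ) + -(((l:ℕ):ℤ) * (k:ℕ)) by ring, ee_add]
      ring
    rw [Finset.sum_congr rfl (fun l _ => h2 l), ← Finset.mul_sum]
    have h3 : (∑ l : Fin n, ((m l * d l : ℝ):ℂ) * ee n (-(((l:ℕ):ℤ) * (k:ℕ))))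
        = dft n (fun l => m l * d l) ((k:ℕ):ℤ) := rfl
    rw [h3, key_dft n ω ϖ ν hn hω hωϖ h2ϖ hνn hνge m d hm hd k hk]
  rw [Finset.sum_congr rfl (fun k hk => inner k (by simpa using hk))]
  have hzero : ∀ k ∈ Finset.univ, k ∉ Finset.univ.filter
      (fun k : Fin n => (k : ℕ) ≤ ϖ - 1 ∨ n - ϖ + 1 ≤ (k : ℕ)) →
      (ee n (((j:ℕ):ℤ) * (k:ℕ)) * (μ * dft n m ((k:ℕ):ℤ))).re = 0 := by
    intro k _ hk
    simp only [Finset.mem_filter, Finset.mem_univ, true_and] at hk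
    have hb : ¬ ((k:ℕ) ≤ ω - 1 ∨ n - ω + 1 ≤ (k:ℕ)) := by
      have := k.isLt
      omega
    rw [hm k hb]
    simp
  rw [Finset.sum_subset (Finset.subset_univ _) hzero]
  have hminv := dft_inversion n hn m j
  have hSm : (∑ k : Fin n, dft n m ((k:ℕ):ℤ) * ee n (((j:ℕ):ℤ) * (k:ℕ))) = (n:ℂ) * (m j : ℝ) := by
    field_simp at hminv
    rw [hminv]
  rw [← Complex.re_sum]
  have h4 : (∑ k : Fin n, ee n (((j:ℕ):ℤ) * (k:ℕ)) * (μ * dft n m ((k:ℕ):ℤ)))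
      = μ * ((n:ℂ) * (m j : ℝ)) := by
    rw [← hSm, Finset.mul_sum]
    refine Finset.sum_congr rfl fun k _ => ?_
    ring
  rw [h4, hμ]
  have h5 : ((((∑ l, d l : ℝ)):ℂ)/n * ((n:ℂ) * ((m j : ℝ):ℂ))) = (((∑ l, d l) * m j : ℝ) : ℂ) := by
    push_cast
    field_simp
  rw [h5, Complex.ofReal_re]
  have hnr : (n:ℝ) ≠ 0 := Nat.cast_ne_zero.2 hn
  field_simp

end APBaux

namespace APBaux

/-- The auxiliary modulation-estimate profile sequence. -/
def Dseq (n : ℕ) (cabs : Fin n → ℝ) : ℕ → Fin n → ℝ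
  | 0 => cabs
  | (i+1) => fun j => max ((∑ l, Dseq n cabs i l) / n) (cabs j)

end APBaux



/-- if `|c|` has its DFT supported on multiples of a divisor `ν ≥ ϖ + ω − 1`
of `n`, `|c_j| ≤ 1` everywhere with equality somewhere, then the AP-B iteration started
from `|s|`, `s = m ∘ c`, converges to the true modulator `m`. -/
theorem APB_converges_to_true_modulator
    (n ω ϖ ν : ℕ) (hn : 1 ≤ n) (hω : 1 ≤ ω) (hωϖ : ω ≤ ϖ) (h2ϖ : 2 * ϖ - 1 ≤ n)
    (hν : ν ∣ n) (hνge : ϖ + ω - 1 ≤ ν)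
    (msig : EuclideanSpace ℝ (Fin n)) (hmsig : msig ∈ Mmod n ω)
    (c : EuclideanSpace ℝ (Fin n))
    (hc : ∀ j, |c j| ≤ 1) (hc1 : ∃ j, |c j| = 1)
    (hcdft : ∀ k : Fin n, ¬ (ν ∣ (k : ℕ)) →
      ∑ j : Fin n, ((|c j| : ℝ) : ℂ) *
        Complex.exp (-(2 * (Real.pi : ℂ) * Complex.I * ((j : ℕ) : ℂ) * ((k : ℕ) : ℂ)) / (n : ℂ)) = 0)
    (s : EuclideanSpace ℝ (Fin n)) (hs : ∀ j, s j = msig j * c j)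
    (mseq : ℕ → EuclideanSpace ℝ (Fin n))
    (hm0 : ∀ j, mseq 0 j = |s j|)
    (hms : ∀ i, mseq (i + 1) = Pgeq n s (Pband n ϖ (mseq i))) :
    Filter.Tendsto mseq Filter.atTop (nhds msig) := by
  classical
  have hn0 : n ≠ 0 := by omega
  haveI : NeZero n := ⟨hn0⟩
  have hnpos : (0:ℝ) < n := by exact_mod_cast Nat.pos_of_ne_zero hn0
  obtain ⟨p, hp⟩ := hν
  have hpν : p * ν = n := by rw [hp]; ring
  -- the shift element
  set pf : Fin n := ⟨p % n, Nat.mod_lt _ (Nat.pos_of_ne_zero hn0)⟩ with hpfdef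
  have hpf : (n : ℤ) ∣ (p : ℤ) - ((pf : ℕ) : ℤ) := by
    have hdm := Nat.div_add_mod p n
    refine ⟨(p / n : ℕ), ?_⟩
    have h2 : (n:ℤ) * ((p / n : ℕ) : ℤ) + ((p % n : ℕ) : ℤ) = (p : ℤ) := by exact_mod_cast hdm
    show (p : ℤ) - ((p % n : ℕ) : ℤ) = (n:ℤ) * ((p / n : ℕ) : ℤ)
    push_cast at h2 ⊢
    linarith
  -- plain functions
  set M : Fin n → ℝ := fun j => msig j with hM
  set cabs : Fin n → ℝ := fun j => |c j| with hcabs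
  -- DFT facts
  have hmdft : ∀ k : Fin n, ¬ ((k:ℕ) ≤ ω - 1 ∨ n - ω + 1 ≤ (k:ℕ)) →
      APBaux.dft n M ((k:ℕ):ℤ) = 0 := by
    intro k hk
    rw [← APBaux.dft_eq_statement]
    exact hmsig.1 k hk
  have hcd : ∀ k : Fin n, ¬ (ν:ℤ) ∣ ((k:ℕ):ℤ) → APBaux.dft n cabs ((k:ℕ):ℤ) = 0 := by
    intro k hk
    rw [← APBaux.dft_eq_statement]
    exact hcdft k (by exact_mod_cast hk)
  have hmnn : ∀ j, 0 ≤ M j := hmsig.2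
  -- periodicity of cabs and of all profiles
  have hper0 : ∀ j, cabs (j + pf) = cabs j :=
    APBaux.periodic_of_dft_support n ν p hn0 hpν cabs pf hpf hcd
  set D : ℕ → Fin n → ℝ := APBaux.Dseq n cabs with hD
  set μ : ℕ → ℝ := fun i => (∑ l, D i l) / n with hμ
  have hDsucc : ∀ i j, D (i+1) j = max (μ i) (cabs j) := fun i j => rfl
  have hDper : ∀ i j, D i (j + pf) = D i j := by
    intro i
    induction i with
    | zero => exact hper0
    | succ i ih => intro j; rw [hDsucc, hDsucc, hper0]
  have hDdft : ∀ i, ∀ k : Fin n, ¬ (ν:ℤ) ∣ ((k:ℕ):ℤ) → APBaux.dft n (D i) ((k:ℕ):ℤ) = 0 :=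
    fun i k hk => APBaux.dft_eq_zero_of_periodic n ν p hn0 hpν (D i) pf hpf (hDper i) _ hk
  have hcabs0 : ∀ j, 0 ≤ cabs j := fun j => abs_nonneg _
  have hDbound : ∀ i j, cabs j ≤ D i j ∧ D i j ≤ 1 := by
    intro i
    induction i with
    | zero => exact fun j => ⟨le_refl _, hc j⟩
    | succ i ih =>
      have hμ1 : μ i ≤ 1 := by
        rw [hμ]
        rw [div_le_one hnpos]
        calc (∑ l, D i l) ≤ ∑ _l : Fin n, (1:ℝ) := Finset.sum_le_sum fun l _ => (ih l).2
        _ = n := by simp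
      intro j
      exact ⟨by rw [hDsucc]; exact le_max_right _ _,
        by rw [hDsucc]; exact max_le hμ1 (hc j)⟩
  have hμ1 : ∀ i, μ i ≤ 1 := by
    intro i
    rw [hμ, div_le_one hnpos]
    calc (∑ l, D i l) ≤ ∑ _l : Fin n, (1:ℝ) := Finset.sum_le_sum fun l _ => (hDbound i l).2
    _ = n := by simp
  have hμ0 : ∀ i, 0 ≤ μ i := by
    intro i
    apply div_nonneg _ hnpos.le
    exact Finset.sum_nonneg fun l _ => le_trans (hcabs0 l) (hDbound i l).1
  -- the main structural identity
  have hseq : ∀ i j, mseq i j = M j * D i j := by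
    intro i
    induction i with
    | zero =>
      intro j
      have hd0 : D 0 j = cabs j := rfl
      rw [hm0 j, hs j, abs_mul, abs_of_nonneg (hmnn j), hd0]
    | succ i ih =>
      intro j
      have hpb : Pband n ϖ (mseq i) j = μ i * M j := by
        show ((WithLp.equiv 2 (Fin n → ℝ)).symm (fun j =>
          (1 / (n : ℝ)) * ∑ k ∈ Finset.univ.filter
              (fun k : Fin n => (k : ℕ) ≤ ϖ - 1 ∨ n - ϖ + 1 ≤ (k : ℕ)),
            ∑ l : Fin n, mseq i l *
              Real.cos (2 * Real.pi * (k : ℕ) * (((j : ℕ) : ℝ) - ((l : ℕ) : ℝ)) / (n : ℝ)))) j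
          = μ i * M j
        rw [WithLp.equiv_symm_apply, PiLp.toLp_apply]
        have hrw : ∀ k : Fin n, (∑ l : Fin n, mseq i l *
              Real.cos (2 * Real.pi * (k : ℕ) * (((j : ℕ) : ℝ) - ((l : ℕ) : ℝ)) / (n : ℝ)))
            = ∑ l : Fin n, (M l * D i l) *
              Real.cos (2 * Real.pi * (k : ℕ) * (((j : ℕ) : ℝ) - ((l : ℕ) : ℝ)) / (n : ℝ)) := by
          intro k
          exact Finset.sum_congr rfl fun l _ => by rw [ih l]
        rw [Finset.sum_congr rfl fun k _ => hrw k]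
        rw [APBaux.key_pband n ω ϖ ν hn0 hω hωϖ h2ϖ ⟨p, hp⟩ hνge M (D i) hmdft (hDdft i) j]
      have : mseq (i+1) j = max (Pband n ϖ (mseq i) j) (|s j|) := by
        rw [hms i]
        show ((WithLp.equiv 2 (Fin n → ℝ)).symm
          (fun j => max ((Pband n ϖ (mseq i)) j) (|s j|))) j = _
        rw [WithLp.equiv_symm_apply, PiLp.toLp_apply]
      rw [this, hpb, hs j, abs_mul, abs_of_nonneg (hmnn j)]
      rw [hDsucc]
      rw [show μ i * M j = M j * μ i by ring]
      rw [← mul_max_of_nonneg _ _ (hmnn j)]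
  -- contraction of 1 - μ
  obtain ⟨j0, hj0⟩ := hc1
  set q : ℝ := ((n:ℝ) - 1) / n with hqdef
  have hq0 : 0 ≤ q := by
    apply div_nonneg _ hnpos.le
    have : (1:ℝ) ≤ n := by exact_mod_cast hn
    linarith
  have hq1 : q < 1 := by
    rw [hqdef, div_lt_one hnpos]
    linarith
  have hcontr : ∀ i, (n:ℝ) * (1 - μ (i+1)) ≤ ((n:ℝ) - 1) * (1 - μ i) := by
    intro i
    have hsum : (n:ℝ) * (1 - μ (i+1)) = ∑ j : Fin n, (1 - max (μ i) (cabs j)) := by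
      rw [Finset.sum_sub_distrib]
      have h1 : (∑ _j : Fin n, (1:ℝ)) = n := by simp
      have h2 : (∑ j : Fin n, max (μ i) (cabs j)) = n * μ (i+1) := by
        have : μ (i+1) = (∑ l, D (i+1) l) / n := rfl
        rw [this]
        rw [Finset.sum_congr rfl fun l (_ : l ∈ Finset.univ) => (hDsucc i l)]
        field_simp
      rw [h1, h2]
      ring
    have hbound : (∑ j : Fin n, (1 - max (μ i) (cabs j)))
        ≤ ∑ j : Fin n, (if j = j0 then 0 else (1 - μ i)) := by
      apply Finset.sum_le_sum
      intro j _
      by_cases hj : j = j0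
      · subst hj
        have h1 : cabs j = 1 := hj0
        have h2 := hμ1 i
        simp [h1, max_eq_right h2]
      · rw [if_neg hj]
        have := le_max_left (μ i) (cabs j)
        linarith
    have hsum2 : (∑ j : Fin n, (if j = j0 then (0:ℝ) else (1 - μ i)))
        = ((n:ℝ) - 1) * (1 - μ i) := by
      have : ∀ j : Fin n, (if j = j0 then (0:ℝ) else (1 - μ i))
          = (1 - μ i) - (if j = j0 then (1 - μ i) else 0) := by
        intro j; by_cases hj : j = j0 <;> simp [hj]
      rw [Finset.sum_congr rfl fun j _ => this j, Finset.sum_sub_distrib,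
        Finset.sum_ite_eq' Finset.univ j0 (fun _ => 1 - μ i)]
      simp
      ring
    rw [hsum]
    exact hbound.trans (le_of_eq hsum2)
  have hgeom : ∀ i, 1 - μ i ≤ q ^ i := by
    intro i
    induction i with
    | zero =>
      have := hμ0 0
      simp only [pow_zero]
      linarith
    | succ i ih =>
      have h1 : 1 - μ (i+1) ≤ q * (1 - μ i) := by
        rw [hqdef, div_mul_eq_mul_div, le_div_iff₀ hnpos]
        have := hcontr i
        linarith
      calc 1 - μ (i+1) ≤ q * (1 - μ i) := h1
        _ ≤ q * q ^ i := mul_le_mul_of_nonneg_left ih hq0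
        _ = q ^ (i+1) := by ring
  -- μ → 1
  have hμtend : Filter.Tendsto μ Filter.atTop (nhds 1) := by
    have hlow : Filter.Tendsto (fun i => 1 - q ^ i) Filter.atTop (nhds 1) := by
      have := (tendsto_pow_atTop_nhds_zero_of_lt_one hq0 hq1).const_sub 1
      simpa using this
    refine tendsto_of_tendsto_of_tendsto_of_le_of_le hlow tendsto_const_nhds
      (fun i => by have := hgeom i; linarith) (fun i => hμ1 i)
  -- componentwise convergence
  have hcomp : ∀ j, Filter.Tendsto (fun i => mseq i j) Filter.atTop (nhds (msig j)) := by
    intro j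
    have hDt : Filter.Tendsto (fun i => D i j) Filter.atTop (nhds 1) := by
      rw [← Filter.tendsto_add_atTop_iff_nat 1]
      have hup : ∀ i, D (i+1) j ≤ 1 := fun i => (hDbound (i+1) j).2
      have hlo : ∀ i, μ i ≤ D (i+1) j := fun i => by rw [hDsucc]; exact le_max_left _ _
      exact tendsto_of_tendsto_of_tendsto_of_le_of_le hμtend tendsto_const_nhds hlo hup
    have : Filter.Tendsto (fun i => M j * D i j) Filter.atTop (nhds (M j * 1)) :=
      hDt.const_mul (M j)
    rw [mul_one] at this
    have hfun : (fun i => mseq i j) = fun i => M j * D i j := funext fun i => hseq i j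
    rw [hfun]
    exact this
  -- lift to EuclideanSpace
  let E := PiLp.continuousLinearEquiv 2 ℝ (fun _ : Fin n => ℝ)
  have h1 : Filter.Tendsto (fun i => E (mseq i)) Filter.atTop (nhds (E msig)) := by
    rw [tendsto_pi_nhds]
    intro j
    exact hcomp j
  have h2 := (E.symm.continuous.tendsto (E msig)).comp h1
  simpa [Function.comp_def] using h2
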